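/- arXiv:1812.02359 — 9 statements merged into one kernel-verified Lean document; each statement's English description precedes it below -/
import Mathlib

section
/- Let z1, z2, z3 be three complex numbers that are not collinear, and let R > 0. Then there exists a constant c > 0, depending only on z1, z2, z3 and R, such that for every eps > 0 and all complex numbers z and z_eps with |z| <= R, |z_eps| <= R, and | |z_eps - zj| - |z - zj| | <= eps for j = 1, 2, 3, one has |z_eps - z| <= c * eps. -/
lemma aux_sq_abs_add (u w : ℂ) :
    (‖u + w‖)^2
      = (‖u‖)^2 + 2*(u.re*w.re + u.im*w.im) + (‖w‖)^2 := by
  simp only [Complex.sq_norm, Complex.normSq_apply, Complex.add_re, Complex.add_im]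
  ring

lemma aux_dist_sq_bound (zj z zeps : ℂ) (R eps : ℝ) (heps : 0 ≤ eps)
    (hz : ‖z‖ ≤ R) (hze : ‖zeps‖ ≤ R)
    (h : |‖zeps - zj‖ - ‖z - zj‖| ≤ eps) :
    |2*((z - zj).re*(zeps - z).re + (z - zj).im*(zeps - z).im) + (‖zeps - z‖)^2|
      ≤ eps * (2*R + 2*‖zj‖) := by
  have hx0 : (0:ℝ) ≤ ‖zeps - zj‖ := norm_nonneg _
  have hy0 : (0:ℝ) ≤ ‖z - zj‖ := norm_nonneg _
  have hxb : ‖zeps - zj‖ ≤ R + ‖zj‖ := by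
    calc ‖zeps - zj‖ ≤ ‖zeps‖ + ‖zj‖ := by
          simpa [sub_eq_add_neg] using norm_add_le zeps (-zj)
      _ ≤ R + ‖zj‖ := by linarith
  have hyb : ‖z - zj‖ ≤ R + ‖zj‖ := by
    calc ‖z - zj‖ ≤ ‖z‖ + ‖zj‖ := by
          simpa [sub_eq_add_neg] using norm_add_le z (-zj)
      _ ≤ R + ‖zj‖ := by linarith
  have hkey : (‖zeps - zj‖)^2 - (‖z - zj‖)^2
      = 2*((z - zj).re*(zeps - z).re + (z - zj).im*(zeps - z).im)
        + (‖zeps - z‖)^2 := by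
    have he : zeps - zj = (z - zj) + (zeps - z) := by ring
    rw [he, aux_sq_abs_add]
    ring
  rw [← hkey]
  have hfac : (‖zeps - zj‖)^2 - (‖z - zj‖)^2
      = (‖zeps - zj‖ - ‖z - zj‖)
        * (‖zeps - zj‖ + ‖z - zj‖) := by ring
  rw [hfac, abs_mul,
    abs_of_nonneg (by linarith : (0:ℝ) ≤ ‖zeps - zj‖ + ‖z - zj‖)]
  calc |‖zeps - zj‖ - ‖z - zj‖|
        * (‖zeps - zj‖ + ‖z - zj‖)
      ≤ eps * (‖zeps - zj‖ + ‖z - zj‖) :=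
        mul_le_mul_of_nonneg_right h (by linarith)
    _ ≤ eps * (2*R + 2*‖zj‖) :=
        mul_le_mul_of_nonneg_left (by linarith) heps

lemma aux_det_ne (a b : ℂ) (hcol : LinearIndependent ℝ ![a, b]) :
    a.re * b.im - a.im * b.re ≠ 0 := by
  have hpair := LinearIndependent.pair_iff.mp hcol
  intro hd0
  have h1 := hpair (b.im) (-a.im) (by
    apply Complex.ext
    · simp only [Complex.add_re, Complex.smul_re, Complex.zero_re, smul_eq_mul]
      linear_combination hd0
    · simp only [Complex.add_im, Complex.smul_im, Complex.zero_im, smul_eq_mul]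
      ring)
  have h2 := hpair (b.re) (-a.re) (by
    apply Complex.ext
    · simp only [Complex.add_re, Complex.smul_re, Complex.zero_re, smul_eq_mul]
      ring
    · simp only [Complex.add_im, Complex.smul_im, Complex.zero_im, smul_eq_mul]
      linear_combination -hd0)
  have ha0 : a = 0 := by
    apply Complex.ext
    · have := h2.2; simpa using this
    · have := h1.2; simpa using this
  have h3 := hpair 1 0 (by rw [ha0]; simp)
  exact one_ne_zero h3.1

lemma aux_combine (E1 E2 P B1 B2 Ke : ℝ) (h1 : |E1| ≤ B1) (h2 : |E2| ≤ B2)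
    (hid : E1 - E2 = 2*P) (hB : B1 + B2 ≤ 2*Ke) : |P| ≤ Ke := by
  rw [abs_le] at h1 h2 ⊢
  constructor <;> linarith [h1.1, h1.2, h2.1, h2.2]

lemma aux_cramer (ar ai br bi x y Me : ℝ) (hMe : 0 ≤ Me)
    (hp : |ar*x + ai*y| ≤ Me) (hq : |br*x + bi*y| ≤ Me) :
    |ar*bi - ai*br| * (|x| + |y|) ≤ 2*(|ar| + |ai| + |br| + |bi|) * Me := by
  have hdx : |ar*bi - ai*br| * |x| ≤ (|bi| + |ai|) * Me := by
    have hid : (ar*bi - ai*br) * x = bi*(ar*x + ai*y) - ai*(br*x + bi*y) := by ring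
    calc |ar*bi - ai*br| * |x| = |(ar*bi - ai*br) * x| := (abs_mul _ _).symm
      _ = |bi*(ar*x + ai*y) - ai*(br*x + bi*y)| := by rw [hid]
      _ ≤ |bi*(ar*x + ai*y)| + |ai*(br*x + bi*y)| := abs_sub _ _
      _ = |bi| * |ar*x + ai*y| + |ai| * |br*x + bi*y| := by rw [abs_mul, abs_mul]
      _ ≤ |bi| * Me + |ai| * Me := by
          have := abs_nonneg bi; have := abs_nonneg ai
          have h1 := mul_le_mul_of_nonneg_left hp (abs_nonneg bi)
          have h2 := mul_le_mul_of_nonneg_left hq (abs_nonneg ai)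
          linarith
      _ = (|bi| + |ai|) * Me := by ring
  have hdy : |ar*bi - ai*br| * |y| ≤ (|ar| + |br|) * Me := by
    have hid : (ar*bi - ai*br) * y = ar*(br*x + bi*y) - br*(ar*x + ai*y) := by ring
    calc |ar*bi - ai*br| * |y| = |(ar*bi - ai*br) * y| := (abs_mul _ _).symm
      _ = |ar*(br*x + bi*y) - br*(ar*x + ai*y)| := by rw [hid]
      _ ≤ |ar*(br*x + bi*y)| + |br*(ar*x + ai*y)| := abs_sub _ _
      _ = |ar| * |br*x + bi*y| + |br| * |ar*x + ai*y| := by rw [abs_mul, abs_mul]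
      _ ≤ |ar| * Me + |br| * Me := by
          have h1 := mul_le_mul_of_nonneg_left hq (abs_nonneg ar)
          have h2 := mul_le_mul_of_nonneg_left hp (abs_nonneg br)
          linarith
      _ = (|ar| + |br|) * Me := by ring
  have hb1 : (0:ℝ) ≤ |ai| * Me := mul_nonneg (abs_nonneg _) hMe
  have hb2 : (0:ℝ) ≤ |ar| * Me := mul_nonneg (abs_nonneg _) hMe
  have hb3 : (0:ℝ) ≤ |bi| * Me := mul_nonneg (abs_nonneg _) hMe
  have hb4 : (0:ℝ) ≤ |br| * Me := mul_nonneg (abs_nonneg _) hMe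
  nlinarith [hdx, hdy]

/-- Stability part of the phase retrieval lemma: a point in the complex plane
(bounded a priori by `R`) depends stably on its three distances to three
non-collinear points. -/
theorem stmt_1 (z1 z2 z3 : ℂ)
    (hcol : LinearIndependent ℝ ![z2 - z1, z3 - z1])
    (R : ℝ) (hR : 0 < R) :
    ∃ c : ℝ, 0 < c ∧ ∀ (eps : ℝ), 0 < eps → ∀ (z zeps : ℂ),
      ‖z‖ ≤ R → ‖zeps‖ ≤ R →
      |‖zeps - z1‖ - ‖z - z1‖| ≤ eps →
      |‖zeps - z2‖ - ‖z - z2‖| ≤ eps →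
      |‖zeps - z3‖ - ‖z - z3‖| ≤ eps →
      ‖zeps - z‖ ≤ c * eps := by
  have hd := aux_det_ne (z2 - z1) (z3 - z1) hcol
  have hdpos : 0 < |(z2 - z1).re * (z3 - z1).im - (z2 - z1).im * (z3 - z1).re| :=
    abs_pos.mpr hd
  have hKpos : (0:ℝ) < 2*R + ‖z1‖ + ‖z2‖ + ‖z3‖ := by
    have := norm_nonneg z1
    have := norm_nonneg z2
    have := norm_nonneg z3
    linarith
  set S : ℝ := |(z2 - z1).re| + |(z2 - z1).im| + |(z3 - z1).re| + |(z3 - z1).im| with hS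
  set K : ℝ := 2*R + ‖z1‖ + ‖z2‖ + ‖z3‖ with hK
  set D : ℝ := |(z2 - z1).re * (z3 - z1).im - (z2 - z1).im * (z3 - z1).re| with hD
  have hSnn : 0 ≤ S := by positivity
  refine ⟨(2*S*K + 1)/D, by positivity, ?_⟩
  intro eps heps z zeps hz hze h1 h2 h3
  have hB1 := aux_dist_sq_bound z1 z zeps R eps heps.le hz hze h1
  have hB2 := aux_dist_sq_bound z2 z zeps R eps heps.le hz hze h2
  have hB3 := aux_dist_sq_bound z3 z zeps R eps heps.le hz hze h3
  -- bound on p := a·w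
  have hpb : |(z2 - z1).re * (zeps - z).re + (z2 - z1).im * (zeps - z).im| ≤ K * eps := by
    apply aux_combine _ _ _ _ _ _ hB1 hB2
    · simp only [Complex.sub_re, Complex.sub_im]
      ring
    · have hkey : 2*(K*eps) - (eps * (2*R + 2*‖z1‖) + eps * (2*R + 2*‖z2‖))
          = 2*(eps * ‖z3‖) := by rw [hK]; ring
      have := mul_nonneg heps.le (norm_nonneg z3)
      linarith
  have hqb : |(z3 - z1).re * (zeps - z).re + (z3 - z1).im * (zeps - z).im| ≤ K * eps := by
    apply aux_combine _ _ _ _ _ _ hB1 hB3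
    · simp only [Complex.sub_re, Complex.sub_im]
      ring
    · have hkey : 2*(K*eps) - (eps * (2*R + 2*‖z1‖) + eps * (2*R + 2*‖z3‖))
          = 2*(eps * ‖z2‖) := by rw [hK]; ring
      have := mul_nonneg heps.le (norm_nonneg z2)
      linarith
  have hcr := aux_cramer (z2 - z1).re (z2 - z1).im (z3 - z1).re (z3 - z1).im
    (zeps - z).re (zeps - z).im (K * eps)
    (mul_nonneg hKpos.le heps.le) hpb hqb
  rw [← hS, ← hD] at hcr
  have hwle : ‖zeps - z‖ ≤ |(zeps - z).re| + |(zeps - z).im| :=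
    Complex.norm_le_abs_re_add_abs_im (zeps - z)
  have hfin : D * ‖zeps - z‖ ≤ (2*S*K + 1) * eps := by
    have h5 : D * ‖zeps - z‖ ≤ D * (|(zeps - z).re| + |(zeps - z).im|) :=
      mul_le_mul_of_nonneg_left hwle hdpos.le
    have h6 : 2*S*(K*eps) ≤ (2*S*K + 1) * eps := by nlinarith
    calc D * ‖zeps - z‖ ≤ D * (|(zeps - z).re| + |(zeps - z).im|) := h5
      _ ≤ 2*S*(K*eps) := by linarith [hcr]
      _ ≤ (2*S*K + 1) * eps := h6
  rw [div_mul_eq_mul_div, le_div_iff₀ hdpos]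
  linarith [hfin]
end

section
/- Translation invariance of phaseless far field data for sources: let F : R^2 -> C^2 be integrable with compact support, let h in R^2, and define F_h(y) := F(y + h). Then for every unit vector xhat in R^2 and every k > 0, |u_p[F_h](xhat, k)| = |u_p[F](xhat, k)| and |u_s[F_h](xhat, k)| = |u_s[F](xhat, k)|. -/
open MeasureTheory

/-- Euclidean inner product on `ℝ × ℝ`. -/
noncomputable def dotR (x y : ℝ × ℝ) : ℝ := x.1 * y.1 + x.2 * y.2

/-- Rotation of a vector anticlockwise by `π/2`: `(a, b)ᵖᵉʳᵖ = (-b, a)`. -/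
noncomputable def perp (x : ℝ × ℝ) : ℝ × ℝ := (-x.2, x.1)

/-- Complex-bilinear extension of the Euclidean inner product. -/
noncomputable def dotC (x : ℝ × ℝ) (F : ℂ × ℂ) : ℂ := x.1 * F.1 + x.2 * F.2

/-- Compressional far field pattern of a source `F`. -/
noncomputable def uP (F : ℝ × ℝ → ℂ × ℂ) (x : ℝ × ℝ) (k : ℝ) : ℂ :=
  ∫ y : ℝ × ℝ, Complex.exp (-Complex.I * (k : ℂ) * (dotR x y : ℂ)) * dotC x (F y)

/-- Shear far field pattern of a source `F`. -/
noncomputable def uS (F : ℝ × ℝ → ℂ × ℂ) (x : ℝ × ℝ) (k : ℝ) : ℂ :=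
  ∫ y : ℝ × ℝ, Complex.exp (-Complex.I * (k : ℂ) * (dotR x y : ℂ)) * dotC (perp x) (F y)

lemma translate_integral (F : ℝ × ℝ → ℂ × ℂ) (h x v : ℝ × ℝ) (k : ℝ) :
    (∫ y : ℝ × ℝ, Complex.exp (-Complex.I * (k : ℂ) * (dotR x y : ℂ)) * dotC v (F (y + h)))
    = Complex.exp (Complex.I * (k : ℂ) * (dotR x h : ℂ)) *
      ∫ y : ℝ × ℝ, Complex.exp (-Complex.I * (k : ℂ) * (dotR x y : ℂ)) * dotC v (F y) := by
  have key : ∀ y : ℝ × ℝ,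
      Complex.exp (-Complex.I * (k : ℂ) * (dotR x y : ℂ)) * dotC v (F (y + h))
      = Complex.exp (Complex.I * (k : ℂ) * (dotR x h : ℂ)) *
        (Complex.exp (-Complex.I * (k : ℂ) * (dotR x (y + h) : ℂ)) * dotC v (F (y + h))) := by
    intro y
    have : (dotR x (y + h) : ℂ) = (dotR x y : ℂ) + (dotR x h : ℂ) := by
      simp [dotR, Prod.fst_add, Prod.snd_add]; push_cast; ring
    rw [← mul_assoc, ← Complex.exp_add]
    congr 2
    rw [this]; ring
  simp_rw [key]
  rw [MeasureTheory.integral_const_mul]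
  congr 1
  exact MeasureTheory.integral_add_right_eq_self
    (fun y => Complex.exp (-Complex.I * (k : ℂ) * (dotR x y : ℂ)) * dotC v (F y)) h

/-- Translation invariance of the phaseless far field data for sources: the
moduli of both the compressional and shear far field patterns are invariant
under translation of the source. -/
theorem stmt_4 (F : ℝ × ℝ → ℂ × ℂ) (hF : Integrable F) (hsupp : HasCompactSupport F)
    (h : ℝ × ℝ) (xhat : ℝ × ℝ) (hx : xhat.1 ^ 2 + xhat.2 ^ 2 = 1) (k : ℝ) (hk : 0 < k) :
    ‖uP (fun y => F (y + h)) xhat k‖ = ‖uP F xhat k‖ ∧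
    ‖uS (fun y => F (y + h)) xhat k‖ = ‖uS F xhat k‖ := by
  have habs : ‖Complex.exp (Complex.I * (k : ℂ) * (dotR xhat h : ℂ))‖ = 1 := by
    rw [Complex.norm_exp]
    simp [mul_comm, mul_assoc]
  constructor
  · rw [uP, uP, translate_integral F h xhat xhat k, norm_mul, habs, one_mul]
  · rw [uS, uS, translate_integral F h xhat (perp xhat) k, norm_mul, habs, one_mul]
end

section
/- Let F1, F2 : R^2 -> C^2 be continuously differentiable with compact support, let xhat be a unit vector in R^2, and let k > 0. If u_p[F1](xhat, k) equals the complex conjugate of u_p[F2](xhat, k), then integral over R^2 of exp(-i k (xhat . y)) div F1(y) dy = - integral over R^2 of exp(-i k (xhat . y)) conj((div F2)(-y)) dy. -/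
open MeasureTheory

/-- Divergence of a vector field `F = (F₁, F₂) : ℝ × ℝ → ℂ × ℂ`. -/
noncomputable def divF (F : ℝ × ℝ → ℂ × ℂ) (y : ℝ × ℝ) : ℂ :=
  fderiv ℝ (fun z => (F z).1) y (1, 0) + fderiv ℝ (fun z => (F z).2) y (0, 1)

namespace Stmt7

noncomputable def e (xhat : ℝ × ℝ) (k : ℝ) (y : ℝ × ℝ) : ℂ :=
  Complex.exp (-Complex.I * (k : ℂ) * (dotR xhat y : ℂ))

noncomputable def phiL (xhat : ℝ × ℝ) (k : ℝ) : (ℝ × ℝ) →L[ℝ] ℂ :=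
  (-Complex.I * k) • ((xhat.1 : ℂ) • (Complex.ofRealCLM.comp (ContinuousLinearMap.fst ℝ ℝ ℝ))
    + (xhat.2 : ℂ) • (Complex.ofRealCLM.comp (ContinuousLinearMap.snd ℝ ℝ ℝ)))

lemma phiL_apply (xhat : ℝ × ℝ) (k : ℝ) (y : ℝ × ℝ) :
    phiL xhat k y = -Complex.I * k * (dotR xhat y : ℂ) := by
  simp [phiL, dotR]
  ring

lemma hasFDerivAt_e (xhat : ℝ × ℝ) (k : ℝ) (y : ℝ × ℝ) :
    HasFDerivAt (e xhat k) (e xhat k y • phiL xhat k) y := by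
  have h1 : HasFDerivAt (fun z => phiL xhat k z) (phiL xhat k) y := (phiL xhat k).hasFDerivAt
  have h2 := h1.cexp
  have he : e xhat k = fun z => Complex.exp (phiL xhat k z) := by
    funext z; rw [phiL_apply]; rfl
  rw [he]
  convert h2 using 2

lemma continuous_e (xhat : ℝ × ℝ) (k : ℝ) : Continuous (e xhat k) := by
  have he : e xhat k = fun z => Complex.exp (phiL xhat k z) := by
    funext z; rw [phiL_apply]; rfl
  rw [he]; exact Complex.continuous_exp.comp (phiL xhat k).continuous


lemma fderiv_e (xhat : ℝ × ℝ) (k : ℝ) (y v : ℝ × ℝ) :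
    fderiv ℝ (e xhat k) y v = (-Complex.I * k * (dotR xhat v : ℂ)) * e xhat k y := by
  rw [(hasFDerivAt_e xhat k y).fderiv]
  simp [phiL_apply]
  ring

lemma integrable_e_mul (xhat : ℝ × ℝ) (k : ℝ) {g : ℝ × ℝ → ℂ} (hg : Continuous g)
    (hsg : HasCompactSupport g) : Integrable (fun y => e xhat k y * g y) := by
  exact ((continuous_e xhat k).mul hg).integrable_of_hasCompactSupport (hsg.mul_left)

lemma ibp (xhat : ℝ × ℝ) (k : ℝ) {g : ℝ × ℝ → ℂ} (hg : ContDiff ℝ 1 g)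
    (hsg : HasCompactSupport g) (v : ℝ × ℝ) :
    ∫ y, e xhat k y * fderiv ℝ g y v =
      (Complex.I * k * (dotR xhat v : ℂ)) * ∫ y, e xhat k y * g y := by
  have hdg : Continuous fun y => fderiv ℝ g y v :=
    (hg.continuous_fderiv one_ne_zero).clm_apply continuous_const
  have hdiff_e : Differentiable ℝ (e xhat k) := fun y => (hasFDerivAt_e xhat k y).differentiableAt
  have key := integral_mul_fderiv_eq_neg_fderiv_mul_of_integrable
    (f := e xhat k) (g := g) (v := v) (μ := volume)
    ?_ (integrable_e_mul xhat k hdg (hsg.fderiv_apply ℝ v))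
    (integrable_e_mul xhat k hg.continuous hsg) (fun x _ => hdiff_e x) (fun x _ => hg.differentiable one_ne_zero x)
  · rw [key]
    have : ∀ y : ℝ × ℝ, fderiv ℝ (e xhat k) y v * g y
        = (-Complex.I * k * (dotR xhat v : ℂ)) * (e xhat k y * g y) := by
      intro y; rw [fderiv_e]; ring
    simp_rw [this, integral_const_mul]
    ring
  · have : ∀ y : ℝ × ℝ, fderiv ℝ (e xhat k) y v * g y
        = (-Complex.I * k * (dotR xhat v : ℂ)) * (e xhat k y * g y) := by
      intro y; rw [fderiv_e]; ring
    simp_rw [this]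
    exact (integrable_e_mul xhat k hg.continuous hsg).const_mul _


lemma div_eq (xhat : ℝ × ℝ) (k : ℝ) {F : ℝ × ℝ → ℂ × ℂ} (hF : ContDiff ℝ 1 F)
    (hs : HasCompactSupport F) :
    ∫ y, e xhat k y * divF F y = Complex.I * k * uP F xhat k := by
  have hg1 : ContDiff ℝ 1 (fun z => (F z).1) := contDiff_fst.comp hF
  have hg2 : ContDiff ℝ 1 (fun z => (F z).2) := contDiff_snd.comp hF
  have hcs1 : HasCompactSupport (fun z => (F z).1) := hs.comp_left (g := Prod.fst) rfl
  have hcs2 : HasCompactSupport (fun z => (F z).2) := hs.comp_left (g := Prod.snd) rfl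
  have h1 := ibp xhat k hg1 hcs1 (1, 0)
  have h2 := ibp xhat k hg2 hcs2 (0, 1)
  have hd1 : (dotR xhat (1, 0) : ℂ) = (xhat.1 : ℂ) := by simp [dotR]
  have hd2 : (dotR xhat (0, 1) : ℂ) = (xhat.2 : ℂ) := by simp [dotR]
  rw [hd1] at h1
  rw [hd2] at h2
  have int1 : Integrable (fun y => e xhat k y * fderiv ℝ (fun z => (F z).1) y (1, 0)) :=
    integrable_e_mul xhat k ((hg1.continuous_fderiv one_ne_zero).clm_apply continuous_const)
      (hcs1.fderiv_apply ℝ _)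
  have int2 : Integrable (fun y => e xhat k y * fderiv ℝ (fun z => (F z).2) y (0, 1)) :=
    integrable_e_mul xhat k ((hg2.continuous_fderiv one_ne_zero).clm_apply continuous_const)
      (hcs2.fderiv_apply ℝ _)
  have intF1 : Integrable (fun y => e xhat k y * (F y).1) :=
    integrable_e_mul xhat k hg1.continuous hcs1
  have intF2 : Integrable (fun y => e xhat k y * (F y).2) :=
    integrable_e_mul xhat k hg2.continuous hcs2
  have expand : ∫ y, e xhat k y * divF F y
      = (∫ y, e xhat k y * fderiv ℝ (fun z => (F z).1) y (1, 0))
        + ∫ y, e xhat k y * fderiv ℝ (fun z => (F z).2) y (0, 1) := by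
    simp_rw [divF, mul_add]
    exact integral_add int1 int2
  have huP : uP F xhat k = (xhat.1 : ℂ) * (∫ y, e xhat k y * (F y).1)
      + (xhat.2 : ℂ) * ∫ y, e xhat k y * (F y).2 := by
    rw [uP]
    have : ∀ y : ℝ × ℝ, Complex.exp (-Complex.I * (k : ℂ) * (dotR xhat y : ℂ)) * dotC xhat (F y)
        = (xhat.1 : ℂ) * (e xhat k y * (F y).1) + (xhat.2 : ℂ) * (e xhat k y * (F y).2) := by
      intro y; rw [dotC]; show e xhat k y * _ = _; ring
    simp_rw [this]
    rw [integral_add (intF1.const_mul _) (intF2.const_mul _), integral_const_mul,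
      integral_const_mul]
  rw [expand, h1, h2, huP]
  ring


lemma fderiv_conj_neg (g : ℝ × ℝ → ℂ) (hg : Differentiable ℝ g) (y v : ℝ × ℝ) :
    fderiv ℝ (fun z => (starRingEnd ℂ) (g (-z))) y v
      = -(starRingEnd ℂ) (fderiv ℝ g (-y) v) := by
  have h1 : HasFDerivAt g (fderiv ℝ g (-y)) (-y) := (hg (-y)).hasFDerivAt
  have hneg : HasFDerivAt (fun z : ℝ × ℝ => -z) (-(ContinuousLinearMap.id ℝ (ℝ × ℝ))) y :=
    (hasFDerivAt_id y).neg
  have h2 : HasFDerivAt (fun z : ℝ × ℝ => g (-z))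
      ((fderiv ℝ g (-y)).comp (-(ContinuousLinearMap.id ℝ (ℝ × ℝ)))) y := h1.comp y hneg
  have h3 := (Complex.conjCLE.toContinuousLinearMap.hasFDerivAt).comp y h2
  have h4 : HasFDerivAt (fun z => (starRingEnd ℂ) (g (-z)))
      (Complex.conjCLE.toContinuousLinearMap.comp
        ((fderiv ℝ g (-y)).comp (-(ContinuousLinearMap.id ℝ (ℝ × ℝ))))) y := h3
  rw [h4.fderiv]
  simp

lemma divG_eq {F2 : ℝ × ℝ → ℂ × ℂ} (hF2 : ContDiff ℝ 1 F2) (y : ℝ × ℝ) :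
    divF (fun z => ((starRingEnd ℂ) ((F2 (-z)).1), (starRingEnd ℂ) ((F2 (-z)).2))) y
      = -(starRingEnd ℂ) (divF F2 (-y)) := by
  have hg1 : Differentiable ℝ (fun z => (F2 z).1) :=
    (contDiff_fst.comp hF2).differentiable one_ne_zero
  have hg2 : Differentiable ℝ (fun z => (F2 z).2) :=
    (contDiff_snd.comp hF2).differentiable one_ne_zero
  have e1 := fderiv_conj_neg (fun z => (F2 z).1) hg1 y (1, 0)
  have e2 := fderiv_conj_neg (fun z => (F2 z).2) hg2 y (0, 1)
  rw [divF, divF]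
  rw [show (fun z => ((((starRingEnd ℂ) ((F2 (-z)).1), (starRingEnd ℂ) ((F2 (-z)).2)) : ℂ × ℂ)).1)
      = fun z => (starRingEnd ℂ) ((F2 (-z)).1) from rfl]
  rw [show (fun z => ((((starRingEnd ℂ) ((F2 (-z)).1), (starRingEnd ℂ) ((F2 (-z)).2)) : ℂ × ℂ)).2)
      = fun z => (starRingEnd ℂ) ((F2 (-z)).2) from rfl]
  rw [e1, e2, map_add]
  ring


noncomputable def conj2 : (ℂ × ℂ) →L[ℝ] (ℂ × ℂ) :=
  (Complex.conjCLE.toContinuousLinearMap).prodMap (Complex.conjCLE.toContinuousLinearMap)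

noncomputable def GG (F2 : ℝ × ℝ → ℂ × ℂ) : ℝ × ℝ → ℂ × ℂ :=
  fun z => ((starRingEnd ℂ) ((F2 (-z)).1), (starRingEnd ℂ) ((F2 (-z)).2))

lemma GG_contDiff {F2 : ℝ × ℝ → ℂ × ℂ} (hF2 : ContDiff ℝ 1 F2) : ContDiff ℝ 1 (GG F2) := by
  have : GG F2 = fun z => conj2 (F2 (-z)) := rfl
  rw [this]
  exact conj2.contDiff.comp (hF2.comp contDiff_neg)

lemma GG_compactSupport {F2 : ℝ × ℝ → ℂ × ℂ} (hs2 : HasCompactSupport F2) :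
    HasCompactSupport (GG F2) := by
  have h1 : HasCompactSupport (fun z => conj2 (F2 z)) :=
    hs2.comp_left (g := conj2) (map_zero _)
  have h2 := h1.comp_homeomorph (Homeomorph.neg (ℝ × ℝ))
  exact h2

lemma uP_GG (F2 : ℝ × ℝ → ℂ × ℂ)
    (xhat : ℝ × ℝ) (k : ℝ) : uP (GG F2) xhat k = (starRingEnd ℂ) (uP F2 xhat k) := by
  rw [uP, uP]
  have key : ∀ y : ℝ × ℝ,
      Complex.exp (-Complex.I * (k : ℂ) * (dotR xhat y : ℂ)) * dotC xhat (GG F2 y)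
        = (starRingEnd ℂ)
            (Complex.exp (-Complex.I * (k : ℂ) * (dotR xhat (-y) : ℂ)) * dotC xhat (F2 (-y))) := by
    intro y
    rw [map_mul]
    congr 1
    · rw [← Complex.exp_conj]
      congr 1
      simp [dotR]
      ring
    · rw [dotC, dotC, map_add, map_mul, map_mul, Complex.conj_ofReal, Complex.conj_ofReal]
      rfl
  simp_rw [key]
  rw [← integral_conj]
  exact integral_neg_eq_self
    (fun y : ℝ × ℝ => (starRingEnd ℂ)
      (Complex.exp (-Complex.I * (k : ℂ) * (dotR xhat y : ℂ)) * dotC xhat (F2 y))) volume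


lemma divGG_eq {F2 : ℝ × ℝ → ℂ × ℂ} (hF2 : ContDiff ℝ 1 F2) (y : ℝ × ℝ) :
    divF (GG F2) y = -(starRingEnd ℂ) (divF F2 (-y)) := divG_eq hF2 y

end Stmt7

/-- The chain of equalities (f1f2) of the paper: if `u_p[F₁](x̂,k)` equals the
complex conjugate of `u_p[F₂](x̂,k)`, then
`∫ exp(-i k x̂⋅y) div F₁(y) dy = -∫ exp(-i k x̂⋅y) conj((div F₂)(-y)) dy`. -/
theorem stmt_7 (F1 F2 : ℝ × ℝ → ℂ × ℂ)
    (hF1 : ContDiff ℝ 1 F1) (hs1 : HasCompactSupport F1)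
    (hF2 : ContDiff ℝ 1 F2) (hs2 : HasCompactSupport F2)
    (xhat : ℝ × ℝ) (hx : xhat.1 ^ 2 + xhat.2 ^ 2 = 1) (k : ℝ) (hk : 0 < k)
    (h : uP F1 xhat k = starRingEnd ℂ (uP F2 xhat k)) :
    ∫ y : ℝ × ℝ, Complex.exp (-Complex.I * (k : ℂ) * (dotR xhat y : ℂ)) * divF F1 y
      = -∫ y : ℝ × ℝ, Complex.exp (-Complex.I * (k : ℂ) * (dotR xhat y : ℂ)) *
          starRingEnd ℂ (divF F2 (-y)) := by
  have hG : ContDiff ℝ 1 (Stmt7.GG F2) := Stmt7.GG_contDiff hF2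
  have hGs : HasCompactSupport (Stmt7.GG F2) := Stmt7.GG_compactSupport hs2
  have h1 := Stmt7.div_eq xhat k hF1 hs1
  have h2 := Stmt7.div_eq xhat k hG hGs
  have h3 := Stmt7.uP_GG F2 xhat k
  have h4 : ∀ y : ℝ × ℝ, Stmt7.e xhat k y * divF (Stmt7.GG F2) y
      = -(Stmt7.e xhat k y * (starRingEnd ℂ) (divF F2 (-y))) := by
    intro y
    rw [Stmt7.divGG_eq hF2]
    ring
  show (∫ y : ℝ × ℝ, Stmt7.e xhat k y * divF F1 y)
      = -∫ y : ℝ × ℝ, Stmt7.e xhat k y * (starRingEnd ℂ) (divF F2 (-y))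
  calc (∫ y : ℝ × ℝ, Stmt7.e xhat k y * divF F1 y)
      = Complex.I * k * uP F1 xhat k := h1
    _ = Complex.I * k * (starRingEnd ℂ) (uP F2 xhat k) := by rw [h]
    _ = Complex.I * k * uP (Stmt7.GG F2) xhat k := by rw [h3]
    _ = ∫ y : ℝ × ℝ, Stmt7.e xhat k y * divF (Stmt7.GG F2) y := h2.symm
    _ = ∫ y : ℝ × ℝ, -(Stmt7.e xhat k y * (starRingEnd ℂ) (divF F2 (-y))) := by simp_rw [h4]
    _ = -∫ y : ℝ × ℝ, Stmt7.e xhat k y * (starRingEnd ℂ) (divF F2 (-y)) := integral_neg _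
end

section
/- Let I be a nonempty open interval of real numbers and let f, g : I -> R be real-analytic functions satisfying cos(f(t)) = cos(g(t)) for all t in I. Then there exists an integer l such that either f(t) - g(t) = 2 pi l for all t in I, or f(t) + g(t) = 2 pi l for all t in I. -/
/-- `Real.sin` is real-analytic everywhere. -/
lemma analyticAt_realSin (x : ℝ) : AnalyticAt ℝ Real.sin x := by
  have h1 : AnalyticAt ℂ Complex.sin (x : ℂ) :=
    Complex.differentiable_sin.analyticAt _
  have h2 : AnalyticAt ℝ Complex.sin ((Complex.ofRealCLM : ℝ →L[ℝ] ℂ) x) :=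
    h1.restrictScalars
  have h3 : AnalyticAt ℝ (fun t : ℝ => Complex.sin t) x :=
    h2.comp (Complex.ofRealCLM.analyticAt x)
  have h4 : AnalyticAt ℝ (fun t : ℝ => (Complex.sin t).re) x :=
    ((Complex.reCLM : ℂ →L[ℝ] ℝ).analyticAt _).comp h3
  have : (fun t : ℝ => (Complex.sin t).re) = Real.sin := by
    funext t; exact Complex.sin_ofReal_re t
  rwa [this] at h4

/-- If `h` is analytic on `Ioo a b` and `sin (h t / 2) = 0` there, then `h` is identically
an integer multiple of `2π` on `Ioo a b`. -/
lemma aux_const_of_sin_half_zero (a b : ℝ) (hab : a < b) (h : ℝ → ℝ)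
    (hh : AnalyticOnNhd ℝ h (Set.Ioo a b))
    (hz : ∀ t ∈ Set.Ioo a b, Real.sin (h t / 2) = 0) :
    ∃ l : ℤ, ∀ t ∈ Set.Ioo a b, h t = 2 * Real.pi * l := by
  have hd : ∀ t ∈ Set.Ioo a b, deriv h t = 0 := by
    intro t ht
    have hdh : HasDerivAt h (deriv h t) t := (hh t ht).differentiableAt.hasDerivAt
    have h1 : HasDerivAt (fun s => Real.sin (h s / 2))
        (Real.cos (h t / 2) * (deriv h t / 2)) t :=
      (Real.hasDerivAt_sin _).comp t (hdh.div_const 2)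
    have heq : (fun s => Real.sin (h s / 2)) =ᶠ[nhds t] fun _ => 0 :=
      Filter.eventually_of_mem (isOpen_Ioo.mem_nhds ht) (fun s hs => hz s hs)
    have h2 : deriv (fun s => Real.sin (h s / 2)) t = 0 := by
      rw [heq.deriv_eq]; exact deriv_const t 0
    rw [h1.deriv] at h2
    have hc : Real.cos (h t / 2) ≠ 0 := by
      rcases Real.sin_eq_zero_iff_cos_eq.1 (hz t ht) with hc | hc <;> rw [hc] <;> norm_num
    have := mul_eq_zero.1 h2
    rcases this with hc' | hd'
    · exact absurd hc' hc
    · linarith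
  set t0 : ℝ := (a + b) / 2 with ht0def
  have ht0 : t0 ∈ Set.Ioo a b := by constructor <;> [skip; skip] <;> simp [ht0def] <;> linarith
  obtain ⟨n, hn⟩ := Real.sin_eq_zero_iff.1 (hz t0 ht0)
  refine ⟨n, fun t ht => ?_⟩
  have hconst : h t = h t0 := by
    refine (convex_Ioo a b).is_const_of_fderivWithin_eq_zero
      (fun s hs => (hh s hs).differentiableAt.differentiableWithinAt)
      (fun s hs => ?_) ht ht0
    have h0 : HasDerivAt h 0 s := hd s hs ▸ (hh s hs).differentiableAt.hasDerivAt
    rw [fderivWithin_of_isOpen isOpen_Ioo hs, h0.hasFDerivAt.fderiv]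
    ext; simp
  rw [hconst]
  have : h t0 = 2 * ((n : ℝ) * Real.pi) := by linarith
  rw [this]; ring

/-- Dichotomy for real-analytic phase functions with equal cosines on a
nonempty open interval: either the difference or the sum of the two phases is
identically an integer multiple of `2π`. -/
theorem stmt_9 (a b : ℝ) (hab : a < b) (f g : ℝ → ℝ)
    (hf : AnalyticOnNhd ℝ f (Set.Ioo a b)) (hg : AnalyticOnNhd ℝ g (Set.Ioo a b))
    (h : ∀ t ∈ Set.Ioo a b, Real.cos (f t) = Real.cos (g t)) :
    ∃ l : ℤ, (∀ t ∈ Set.Ioo a b, f t - g t = 2 * Real.pi * l) ∨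
             (∀ t ∈ Set.Ioo a b, f t + g t = 2 * Real.pi * l) := by
  set U := Set.Ioo a b with hU
  have hUo : IsOpen U := isOpen_Ioo
  have hUc : IsPreconnected U := (convex_Ioo a b).isPreconnected
  set F : ℝ → ℝ := fun t => Real.sin ((f t - g t) / 2) with hFdef
  set G : ℝ → ℝ := fun t => Real.sin ((f t + g t) / 2) with hGdef
  have hFa : AnalyticOnNhd ℝ F U := fun t ht =>
    (analyticAt_realSin _).comp (((hf t ht).sub (hg t ht)).div analyticAt_const two_ne_zero)
  have hGa : AnalyticOnNhd ℝ G U := fun t ht =>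
    (analyticAt_realSin _).comp (((hf t ht).add (hg t ht)).div analyticAt_const two_ne_zero)
  have hprod : ∀ t ∈ U, G t * F t = 0 := by
    intro t ht
    have := Real.cos_sub_cos (f t) (g t)
    rw [h t ht, sub_self] at this
    have : -2 * G t * F t = 0 := this.symm
    nlinarith [this]
  by_cases hFz : ∀ t ∈ U, F t = 0
  · obtain ⟨l, hl⟩ := aux_const_of_sin_half_zero a b hab (fun t => f t - g t)
      (fun t ht => (hf t ht).sub (hg t ht)) hFz
    exact ⟨l, Or.inl hl⟩
  · push_neg at hFz
    obtain ⟨t1, ht1, hFt1⟩ := hFz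
    have hGz : Set.EqOn G 0 U := by
      have hFc : ContinuousAt F t1 := (hFa t1 ht1).continuousAt
      have hnb : ∀ᶠ s in nhds t1, F s ≠ 0 := hFc.eventually_ne hFt1
      have hnbU : ∀ᶠ s in nhds t1, s ∈ U := hUo.mem_nhds ht1
      have hev : ∀ᶠ s in nhds t1, G s = 0 := by
        filter_upwards [hnb, hnbU] with s hs hsU
        have := hprod s hsU
        rcases mul_eq_zero.1 this with h' | h'
        · exact h'
        · exact absurd h' hs
      have hev' : ∀ᶠ s in nhdsWithin t1 {t1}ᶜ, G s = 0 :=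
        hev.filter_mono nhdsWithin_le_nhds
      exact hGa.eqOn_zero_of_preconnected_of_frequently_eq_zero hUc ht1 hev'.frequently
    obtain ⟨l, hl⟩ := aux_const_of_sin_half_zero a b hab (fun t => f t + g t)
      (fun t ht => (hf t ht).add (hg t ht)) (fun t ht => hGz ht)
    exact ⟨l, Or.inr hl⟩
end

section
/- Let F1, F2 : R^2 -> C^2 be continuous with compact support and let xhat0 be a unit vector in R^2. Suppose that for every real k, integral over R^2 of exp(-i k (xhat0 . y)) (xhat0 . F1(y)) dy = integral over R^2 of exp(-i k (xhat0 . y)) (xhat0 . F2(y)) dy. Then for every real s, integral over t in R of xhat0 . F1(s xhat0 + t xhat0_perp) dt = integral over t in R of xhat0 . F2(s xhat0 + t xhat0_perp) dt. -/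
open MeasureTheory

section Aux
open Real FourierTransform Complex

/-- The rotation sending `(s, t)` to `s • x + t • perp x`, as a linear map. -/
noncomputable def rotL (x : ℝ × ℝ) : (ℝ × ℝ) →ₗ[ℝ] (ℝ × ℝ) :=
  Matrix.toLin (Module.Basis.finTwoProd ℝ) (Module.Basis.finTwoProd ℝ) !![x.1, -x.2; x.2, x.1]

lemma rotL_apply (x p : ℝ × ℝ) : rotL x p = p.1 • x + p.2 • perp x := by
  simp only [rotL, Matrix.toLin_finTwoProd_apply, perp, Prod.ext_iff, Prod.fst_add,
    Prod.snd_add, Prod.smul_fst, Prod.smul_snd, smul_eq_mul]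
  constructor <;> ring

lemma rotL_det (x : ℝ × ℝ) : LinearMap.det (rotL x) = x.1 ^ 2 + x.2 ^ 2 := by
  rw [rotL, LinearMap.det_toLin, Matrix.det_fin_two_of]
  ring

lemma rotL_map_volume (x : ℝ × ℝ) (hx : x.1 ^ 2 + x.2 ^ 2 = 1) :
    Measure.map (rotL x) (volume : Measure (ℝ × ℝ)) = volume := by
  have hdet : LinearMap.det (rotL x) ≠ 0 := by rw [rotL_det, hx]; norm_num
  rw [Measure.map_linearMap_addHaar_eq_smul_addHaar _ hdet, rotL_det, hx]
  simp

lemma dotR_rot (x : ℝ × ℝ) (hx : x.1 ^ 2 + x.2 ^ 2 = 1) (p : ℝ × ℝ) :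
    dotR x (p.1 • x + p.2 • perp x) = p.1 := by
  simp only [dotR, perp, Prod.fst_add, Prod.snd_add, Prod.smul_fst, Prod.smul_snd, smul_eq_mul]
  linear_combination p.1 * hx

lemma dotR_rot_perp (x : ℝ × ℝ) (hx : x.1 ^ 2 + x.2 ^ 2 = 1) (p : ℝ × ℝ) :
    dotR (perp x) (p.1 • x + p.2 • perp x) = p.2 := by
  simp only [dotR, perp, Prod.fst_add, Prod.snd_add, Prod.smul_fst, Prod.smul_snd, smul_eq_mul]
  linear_combination p.2 * hx

lemma continuous_dotC (x : ℝ × ℝ) : Continuous (dotC x) := by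
  unfold dotC; fun_prop

/-- Continuity, compact support, and slicewise integrability of the marginal
of a continuous compactly supported function on `ℝ × ℝ`. -/
lemma marginal_props (ψ : ℝ × ℝ → ℂ) (hc : Continuous ψ) (hs : HasCompactSupport ψ) :
    Continuous (fun s : ℝ => ∫ t : ℝ, ψ (s, t)) ∧
      HasCompactSupport (fun s : ℝ => ∫ t : ℝ, ψ (s, t)) ∧
      ∀ s : ℝ, Integrable (fun t : ℝ => ψ (s, t)) := by
  obtain ⟨C, hC⟩ := hs.exists_bound_of_continuous hc
  have hK : IsCompact (tsupport ψ) := hs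
  have hK2 : IsCompact (Prod.snd '' tsupport ψ) := hK.image continuous_snd
  have hK1 : IsCompact (Prod.fst '' tsupport ψ) := hK.image continuous_fst
  have hmem : ∀ s t : ℝ, t ∉ Prod.snd '' tsupport ψ → ψ (s, t) = 0 := by
    intro s t ht
    by_contra h0
    exact ht ⟨(s, t), subset_tsupport _ h0, rfl⟩
  have hmem1 : ∀ s : ℝ, s ∉ Prod.fst '' tsupport ψ → ∀ t : ℝ, ψ (s, t) = 0 := by
    intro s hsmem t
    by_contra h0
    exact hsmem ⟨(s, t), subset_tsupport _ h0, rfl⟩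
  have hint : ∀ s : ℝ, Integrable (fun t : ℝ => ψ (s, t)) := by
    intro s
    refine (hc.comp (continuous_const.prodMk continuous_id)).integrable_of_hasCompactSupport ?_
    exact HasCompactSupport.intro hK2 (fun t ht => hmem s t ht)
  refine ⟨?_, ?_, hint⟩
  · refine continuous_of_dominated
      (fun s => (hc.comp (continuous_const.prodMk continuous_id)).aestronglyMeasurable)
      (bound := (Prod.snd '' tsupport ψ).indicator fun _ => C) ?_ ?_ ?_
    · intro s
      filter_upwards with t
      by_cases ht : t ∈ Prod.snd '' tsupport ψ
      · rw [Set.indicator_of_mem ht]; exact hC _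
      · rw [Set.indicator_of_notMem ht, hmem s t ht]; simp
    · rw [integrable_indicator_iff hK2.isClosed.measurableSet]
      exact integrableOn_const hK2.measure_lt_top.ne
    · filter_upwards with t
      exact hc.comp (continuous_id.prodMk continuous_const)
  · refine HasCompactSupport.intro hK1 (fun s hsmem => ?_)
    simp [hmem1 s hsmem]

/-- Key slicing identity: the frequency-`k` far-field datum equals the
one-dimensional Fourier-type integral of the line-integral profile. -/
lemma key (F : ℝ × ℝ → ℂ × ℂ) (hc : Continuous F) (hs : HasCompactSupport F)
    (x : ℝ × ℝ) (hx : x.1 ^ 2 + x.2 ^ 2 = 1) (k : ℝ) :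
    (∫ y : ℝ × ℝ, Complex.exp (-Complex.I * (k : ℂ) * (dotR x y : ℂ)) * dotC x (F y))
      = ∫ s : ℝ, Complex.exp (-Complex.I * (k : ℂ) * (s : ℂ)) *
          ∫ t : ℝ, dotC x (F (s • x + t • perp x)) := by
  set φ : ℝ × ℝ → ℂ := fun y => Complex.exp (-Complex.I * (k : ℂ) * (dotR x y : ℂ)) *
    dotC x (F y) with hφ
  have hcg : Continuous fun y => dotC x (F y) := (continuous_dotC x).comp hc
  have hsg : HasCompactSupport fun y => dotC x (F y) := by
    apply hs.comp_left (g := dotC x)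
    simp [dotC]
  have hcdR : Continuous fun y : ℝ × ℝ => dotR x y := by unfold dotR; fun_prop
  have hcφ : Continuous φ :=
    (Complex.continuous_exp.comp
      (continuous_const.mul (Complex.continuous_ofReal.comp hcdR))).mul hcg
  have hsφ : HasCompactSupport φ := hsg.mul_left
  -- change of variables
  have hTc : Continuous (rotL x) := (rotL x).continuous_of_finiteDimensional
  have step1 : (∫ y : ℝ × ℝ, φ y) = ∫ p : ℝ × ℝ, φ (rotL x p) := by
    conv_lhs => rw [← rotL_map_volume x hx]
    exact integral_map hTc.aemeasurable hcφ.aestronglyMeasurable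
  rw [step1]
  -- the composed integrand
  set Φ : ℝ × ℝ → ℂ := fun p => φ (rotL x p) with hΦ
  have hcΦ : Continuous Φ := hcφ.comp hTc
  have hsΦ : HasCompactSupport Φ := by
    have hKc : IsCompact ((fun y => (dotR x y, dotR (perp x) y)) '' tsupport φ) := by
      refine hsφ.image ?_
      unfold dotR; fun_prop
    refine HasCompactSupport.intro hKc (fun p hp => ?_)
    by_contra h0
    refine hp ⟨rotL x p, subset_tsupport _ h0, ?_⟩
    dsimp only
    rw [rotL_apply, dotR_rot x hx p, dotR_rot_perp x hx p]
  have hintΦ : Integrable Φ := hcΦ.integrable_of_hasCompactSupport hsΦ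
  have step2 : (∫ p : ℝ × ℝ, Φ p) = ∫ s : ℝ, ∫ t : ℝ, Φ (s, t) := by
    rw [MeasureTheory.Measure.volume_eq_prod] at hintΦ ⊢
    exact MeasureTheory.integral_prod Φ hintΦ
  calc (∫ p : ℝ × ℝ, φ (rotL x p)) = ∫ s : ℝ, ∫ t : ℝ, Φ (s, t) := step2
    _ = ∫ s : ℝ, Complex.exp (-Complex.I * (k : ℂ) * (s : ℂ)) *
          ∫ t : ℝ, dotC x (F (s • x + t • perp x)) := by
        congr 1 with s
        rw [← integral_const_mul]
        congr 1 with t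
        simp only [hΦ, hφ, rotL_apply]
        have h1 : dotR x ((s, t).1 • x + (s, t).2 • perp x) = s := dotR_rot x hx (s, t)
        simp only [h1]

/-- The real Fourier integral of the zero function vanishes. -/
lemma fourierIntegralInv_zero : 𝓕⁻ (0 : ℝ → ℂ) = 0 := by
  funext w
  simp [Real.fourierInv_eq]

end Aux

open Real FourierTransform in
/-- Core of the strip-determination theorem: all-frequency compressional far
field data at one fixed observation direction determines the line-integral
profile of the source in that direction. -/
theorem stmt_11 (F1 F2 : ℝ × ℝ → ℂ × ℂ)
    (hc1 : Continuous F1) (hs1 : HasCompactSupport F1)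
    (hc2 : Continuous F2) (hs2 : HasCompactSupport F2)
    (xhat0 : ℝ × ℝ) (hx : xhat0.1 ^ 2 + xhat0.2 ^ 2 = 1)
    (h : ∀ k : ℝ,
      (∫ y : ℝ × ℝ, Complex.exp (-Complex.I * (k : ℂ) * (dotR xhat0 y : ℂ)) *
          dotC xhat0 (F1 y))
        = ∫ y : ℝ × ℝ, Complex.exp (-Complex.I * (k : ℂ) * (dotR xhat0 y : ℂ)) *
            dotC xhat0 (F2 y)) :
    ∀ s : ℝ,
      (∫ t : ℝ, dotC xhat0 (F1 (s • xhat0 + t • perp xhat0)))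
        = ∫ t : ℝ, dotC xhat0 (F2 (s • xhat0 + t • perp xhat0)) := by
  intro s₀
  -- the rotated slices
  set ψ1 : ℝ × ℝ → ℂ := fun p => dotC xhat0 (F1 (p.1 • xhat0 + p.2 • perp xhat0)) with hψ1
  set ψ2 : ℝ × ℝ → ℂ := fun p => dotC xhat0 (F2 (p.1 • xhat0 + p.2 • perp xhat0)) with hψ2
  have hTc : Continuous (fun p : ℝ × ℝ => p.1 • xhat0 + p.2 • perp xhat0) := by fun_prop
  have haux : ∀ (F : ℝ × ℝ → ℂ × ℂ), Continuous F → HasCompactSupport F →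
      Continuous (fun p : ℝ × ℝ => dotC xhat0 (F (p.1 • xhat0 + p.2 • perp xhat0))) ∧
      HasCompactSupport (fun p : ℝ × ℝ => dotC xhat0 (F (p.1 • xhat0 + p.2 • perp xhat0))) := by
    intro F hc hs
    have hcg : Continuous fun y => dotC xhat0 (F y) := (continuous_dotC xhat0).comp hc
    have hsg : HasCompactSupport fun y => dotC xhat0 (F y) := by
      apply hs.comp_left (g := dotC xhat0)
      simp [dotC]
    refine ⟨hcg.comp hTc, ?_⟩
    have hKc : IsCompact ((fun y => (dotR xhat0 y, dotR (perp xhat0) y)) ''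
        tsupport (fun y => dotC xhat0 (F y))) := by
      refine hsg.image ?_
      unfold dotR; fun_prop
    refine HasCompactSupport.intro hKc (fun p hp => ?_)
    by_contra h0
    refine hp ⟨p.1 • xhat0 + p.2 • perp xhat0, subset_tsupport _ h0, ?_⟩
    dsimp only
    rw [dotR_rot xhat0 hx p, dotR_rot_perp xhat0 hx p]
  obtain ⟨hcψ1, hsψ1⟩ := haux F1 hc1 hs1
  obtain ⟨hcψ2, hsψ2⟩ := haux F2 hc2 hs2
  obtain ⟨hg1c, hg1s, hg1i⟩ := marginal_props ψ1 hcψ1 hsψ1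
  obtain ⟨hg2c, hg2s, hg2i⟩ := marginal_props ψ2 hcψ2 hsψ2
  set g1 : ℝ → ℂ := fun s => ∫ t : ℝ, ψ1 (s, t) with hg1
  set g2 : ℝ → ℂ := fun s => ∫ t : ℝ, ψ2 (s, t) with hg2
  set G : ℝ → ℂ := fun s => g1 s - g2 s with hG
  have hGc : Continuous G := hg1c.sub hg2c
  have hGs : HasCompactSupport G := by
    rw [hG]
    simp only [sub_eq_add_neg]
    exact hg1s.add hg2s.neg
  have hGi : Integrable G := hGc.integrable_of_hasCompactSupport hGs
  -- the one-dimensional Fourier data vanishes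
  have hfd : ∀ k : ℝ, (∫ t : ℝ, Complex.exp (-Complex.I * (k : ℂ) * (t : ℂ)) * G t) = 0 := by
    intro k
    have h1 := key F1 hc1 hs1 xhat0 hx k
    have h2 := key F2 hc2 hs2 xhat0 hx k
    have heq : (∫ t : ℝ, Complex.exp (-Complex.I * (k : ℂ) * (t : ℂ)) * g1 t)
        = ∫ t : ℝ, Complex.exp (-Complex.I * (k : ℂ) * (t : ℂ)) * g2 t := by
      rw [← h1, ← h2, h k]
    have hce : Continuous fun t : ℝ => Complex.exp (-Complex.I * (k : ℂ) * (t : ℂ)) := by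
      fun_prop
    have hi1 : Integrable (fun t : ℝ => Complex.exp (-Complex.I * (k : ℂ) * (t : ℂ)) * g1 t) :=
      (hce.mul hg1c).integrable_of_hasCompactSupport hg1s.mul_left
    have hi2 : Integrable (fun t : ℝ => Complex.exp (-Complex.I * (k : ℂ) * (t : ℂ)) * g2 t) :=
      (hce.mul hg2c).integrable_of_hasCompactSupport hg2s.mul_left
    have : (∫ t : ℝ, (Complex.exp (-Complex.I * (k : ℂ) * (t : ℂ)) * g1 t
        - Complex.exp (-Complex.I * (k : ℂ) * (t : ℂ)) * g2 t)) = 0 := by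
      rw [integral_sub hi1 hi2, heq, sub_self]
    calc (∫ t : ℝ, Complex.exp (-Complex.I * (k : ℂ) * (t : ℂ)) * G t)
        = ∫ t : ℝ, (Complex.exp (-Complex.I * (k : ℂ) * (t : ℂ)) * g1 t
            - Complex.exp (-Complex.I * (k : ℂ) * (t : ℂ)) * g2 t) := by
          congr 1 with t
          simp only [hG]
          ring
      _ = 0 := this
  -- hence the Fourier transform of `G` vanishes
  have hFG : 𝓕 G = 0 := by
    funext w
    simp only [Pi.zero_apply]
    rw [Real.fourier_real_eq_integral_exp_smul, ← hfd (2 * Real.pi * w)]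
    congr 1 with v
    rw [smul_eq_mul]
    congr 1
    push_cast
    ring
  have hinv := hGc.fourierInv_fourier_eq hGi (by rw [hFG]; exact integrable_zero _ _ _)
  rw [hFG, fourierIntegralInv_zero] at hinv
  have hG0 : G s₀ = 0 := by rw [← hinv]; rfl
  have : g1 s₀ = g2 s₀ := by
    have := sub_eq_zero.mp hG0
    exact this
  exact this
end

section
/- Let tau1 be a nonzero complex number, k > 0, z0, z1 in R^2, and let xhat be a unit vector in R^2 with k * (xhat . (z0 - z1)) not an integer multiple of pi. If u1, u2 are complex numbers satisfying |u1| = |u2| and |u1 + tau1 exp(-i k (xhat . zj))| = |u2 + tau1 exp(-i k (xhat . zj))| for j = 0, 1, then u1 = u2. -/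
/-- Pointwise phase determination from one scattering strength at two source
points: if `k x̂ ⋅ (z₀ - z₁)` is not an integer multiple of `π`, then the
modulus of `u` together with the moduli of the two augmented values
`u + τ₁ exp(-i k x̂⋅zⱼ)` determine `u`. -/
theorem stmt_13 (tau1 : ℂ) (htau : tau1 ≠ 0) (k : ℝ) (hk : 0 < k)
    (z0 z1 : ℝ × ℝ) (xhat : ℝ × ℝ) (hx : xhat.1 ^ 2 + xhat.2 ^ 2 = 1)
    (hpi : ∀ n : ℤ, k * dotR xhat (z0 - z1) ≠ n * Real.pi)
    (u1 u2 : ℂ) (h0 : ‖u1‖ = ‖u2‖)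
    (ha : ‖u1 + tau1 * Complex.exp (-Complex.I * (k : ℂ) * (dotR xhat z0 : ℂ))‖
        = ‖u2 + tau1 * Complex.exp (-Complex.I * (k : ℂ) * (dotR xhat z0 : ℂ))‖)
    (hb : ‖u1 + tau1 * Complex.exp (-Complex.I * (k : ℂ) * (dotR xhat z1 : ℂ))‖
        = ‖u2 + tau1 * Complex.exp (-Complex.I * (k : ℂ) * (dotR xhat z1 : ℂ))‖) :
    u1 = u2 := by
  set d0 : ℝ := dotR xhat z0 with hd0
  set d1 : ℝ := dotR xhat z1 with hd1
  have hdsub : dotR xhat (z0 - z1) = d0 - d1 := by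
    simp only [dotR, hd0, hd1, Prod.fst_sub, Prod.snd_sub]; ring
  have hsin : Real.sin (k * d0 - k * d1) ≠ 0 := by
    intro h
    rw [Real.sin_eq_zero_iff] at h
    obtain ⟨n, hn⟩ := h
    exact hpi n (by rw [hdsub]; linarith)
  have hn0 : Complex.normSq u1 = Complex.normSq u2 := by
    rw [← Complex.sq_norm, ← Complex.sq_norm, h0]
  have key : ∀ c : ℂ, ‖u1 + c‖ = ‖u2 + c‖ →
      ((u1 - u2) * (starRingEnd ℂ) c).re = 0 := by
    intro c h
    have h2 := congrArg (· ^ 2) h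
    simp only [Complex.sq_norm] at h2
    rw [Complex.normSq_add, Complex.normSq_add, hn0] at h2
    have h3 : (u1 * (starRingEnd ℂ) c).re = (u2 * (starRingEnd ℂ) c).re := by linarith
    rw [sub_mul, Complex.sub_re, h3, sub_self]
  set z : ℂ := (u1 - u2) * (starRingEnd ℂ) tau1 with hz
  have hre : ∀ d : ℝ,
      ((u1 - u2) * (starRingEnd ℂ) (tau1 * Complex.exp (-Complex.I * (k:ℂ) * (d:ℂ)))).re
      = z.re * Real.cos (k*d) - z.im * Real.sin (k*d) := by
    intro d
    have hc : (starRingEnd ℂ) (Complex.exp (-Complex.I * (k:ℂ) * (d:ℂ)))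
        = Complex.exp (((k*d : ℝ) : ℂ) * Complex.I) := by
      rw [← Complex.exp_conj]
      congr 1
      simp only [map_mul, map_neg, Complex.conj_I, Complex.conj_ofReal]
      push_cast; ring
    rw [map_mul, hc]
    rw [show (u1 - u2) * ((starRingEnd ℂ) tau1 * Complex.exp (((k*d : ℝ) : ℂ) * Complex.I))
        = z * Complex.exp (((k*d : ℝ) : ℂ) * Complex.I) by rw [hz]; ring]
    rw [Complex.mul_re, Complex.exp_ofReal_mul_I_re, Complex.exp_ofReal_mul_I_im]
  have e0 : z.re * Real.cos (k*d0) - z.im * Real.sin (k*d0) = 0 := by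
    rw [← hre d0]; exact key _ ha
  have e1 : z.re * Real.cos (k*d1) - z.im * Real.sin (k*d1) = 0 := by
    rw [← hre d1]; exact key _ hb
  have hzre : z.re = 0 := by
    have h1 : z.re * Real.sin (k*d1 - k*d0) = 0 := by
      rw [Real.sin_sub]
      linear_combination Real.sin (k*d1) * e0 - Real.sin (k*d0) * e1
    have : Real.sin (k*d1 - k*d0) ≠ 0 := by
      rw [show k*d1 - k*d0 = -(k*d0 - k*d1) by ring, Real.sin_neg]
      simpa using hsin
    exact (mul_eq_zero.mp h1).resolve_right this
  have hzim : z.im = 0 := by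
    have h1 : z.im * Real.sin (k*d0 - k*d1) = 0 := by
      rw [Real.sin_sub]
      linear_combination Real.cos (k*d0) * e1 - Real.cos (k*d1) * e0
    exact (mul_eq_zero.mp h1).resolve_right hsin
  have hz0 : z = 0 := Complex.ext hzre hzim
  have : (u1 - u2) = 0 := by
    rcases mul_eq_zero.mp (hz ▸ hz0 : (u1 - u2) * (starRingEnd ℂ) tau1 = 0) with h | h
    · exact h
    · exact absurd (by simpa using h : tau1 = 0) htau
  exact sub_eq_zero.mp this
end

section
/- Let tau1, tau2, tau3 be complex numbers such that tau2 - tau1 and tau3 - tau1 are linearly independent over the reals, and let w be a nonzero complex number. If u1, u2 are complex numbers satisfying |u1 + tauj * w| = |u2 + tauj * w| for j = 1, 2, 3, then u1 = u2. -/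
/-- Pointwise phase determination with three scattering strengths: if
`τ₂ - τ₁` and `τ₃ - τ₁` are linearly independent over `ℝ` and `w ≠ 0`, then
the three moduli `|u + τⱼ w|` determine `u`. -/
theorem stmt_14 (tau1 tau2 tau3 : ℂ)
    (htau : LinearIndependent ℝ ![tau2 - tau1, tau3 - tau1])
    (w : ℂ) (hw : w ≠ 0) (u1 u2 : ℂ)
    (h1 : ‖u1 + tau1 * w‖ = ‖u2 + tau1 * w‖)
    (h2 : ‖u1 + tau2 * w‖ = ‖u2 + tau2 * w‖)
    (h3 : ‖u1 + tau3 * w‖ = ‖u2 + tau3 * w‖) :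
    u1 = u2 := by
  have e1 : Complex.normSq (u1 + tau1 * w) = Complex.normSq (u2 + tau1 * w) := by
    rw [← Complex.sq_norm, ← Complex.sq_norm, h1]
  have e2 : Complex.normSq (u1 + tau2 * w) = Complex.normSq (u2 + tau2 * w) := by
    rw [← Complex.sq_norm, ← Complex.sq_norm, h2]
  have e3 : Complex.normSq (u1 + tau3 * w) = Complex.normSq (u2 + tau3 * w) := by
    rw [← Complex.sq_norm, ← Complex.sq_norm, h3]
  set a : ℂ := tau2 - tau1 with ha
  set b : ℂ := tau3 - tau1 with hb
  set z : ℂ := (u1 - u2) * (starRingEnd ℂ) w with hz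
  have hA : (z * (starRingEnd ℂ) a).re = 0 := by
    simp only [hz, ha, Complex.normSq_apply, Complex.add_re, Complex.add_im,
      Complex.mul_re, Complex.mul_im, Complex.sub_re, Complex.sub_im,
      Complex.conj_re, Complex.conj_im] at e1 e2 ⊢
    linear_combination e2 / 2 - e1 / 2
  have hB : (z * (starRingEnd ℂ) b).re = 0 := by
    simp only [hz, hb, Complex.normSq_apply, Complex.add_re, Complex.add_im,
      Complex.mul_re, Complex.mul_im, Complex.sub_re, Complex.sub_im,
      Complex.conj_re, Complex.conj_im] at e1 e3 ⊢
    linear_combination e3 / 2 - e1 / 2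
  have hind := LinearIndependent.pair_iff.mp htau
  have hz0 : z = 0 := by
    by_contra hzne
    set r : ℝ := (z * (starRingEnd ℂ) a).im with hr
    set s : ℝ := (z * (starRingEnd ℂ) b).im with hs
    have key : (starRingEnd ℂ) (s • a + (-r) • b) * z = 0 := by
      have hza : z * (starRingEnd ℂ) a = Complex.I * r := by
        apply Complex.ext <;> simp [hA, hr]
      have hzb : z * (starRingEnd ℂ) b = Complex.I * s := by
        apply Complex.ext <;> simp [hB, hs]
      have : (starRingEnd ℂ) (s • a + (-r) • b) * z
          = (s : ℂ) * (z * (starRingEnd ℂ) a) - (r : ℂ) * (z * (starRingEnd ℂ) b) := by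
        simp [map_add, map_smul, Complex.real_smul, map_mul]
        ring
      rw [this, hza, hzb]; ring
    have hcomb : s • a + (-r) • b = 0 := by
      rcases mul_eq_zero.mp key with hc | hc
      · have := congrArg (starRingEnd ℂ) hc
        simpa using this
      · exact absurd hc hzne
    obtain ⟨hs0, hr0⟩ := hind s (-r) hcomb
    have hr0' : r = 0 := by linarith [neg_eq_zero.mp hr0]
    have hza0 : z * (starRingEnd ℂ) a = 0 := by
      apply Complex.ext <;> simp [hA, ← hr, hr0']
    have ha0 : a = 0 := by
      rcases mul_eq_zero.mp hza0 with hc | hc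
      · exact absurd hc hzne
      · simpa using hc
    have : a ≠ 0 := by
      have := htau.ne_zero 0
      simpa using this
    exact this ha0
  have hd : u1 - u2 = 0 := by
    rcases mul_eq_zero.mp hz0 with hc | hc
    · exact hc
    · exact absurd (by simpa using hc) hw
  exact sub_eq_zero.mp hd
end

section
/- Let tau1, tau2, tau3 be complex numbers such that tau2 - tau1 and tau3 - tau1 are linearly independent over the reals, and let M > 0. Then there exists a constant c > 0, depending only on tau1, tau2, tau3 and M, such that for every complex number w with 1/2 <= |w| <= 1, every eps > 0, and all complex numbers u, v with |u| <= M and |v| <= M satisfying | |v + tauj w| - |u + tauj w| | <= eps for j = 1, 2, 3, one has |v - u| <= c * eps. -/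
/-- Stability of phase retrieval with three scattering strengths: for
`τ₂ - τ₁, τ₃ - τ₁` linearly independent over `ℝ` and an a priori bound `M`,
there is a constant `c > 0` such that whenever `1/2 ≤ |w| ≤ 1` and the three
moduli `|v + τⱼ w|` differ from `|u + τⱼ w|` by at most `ε`, one has
`|v - u| ≤ c ε`. -/
theorem stmt_15 (tau1 tau2 tau3 : ℂ)
    (htau : LinearIndependent ℝ ![tau2 - tau1, tau3 - tau1])
    (M : ℝ) (hM : 0 < M) :
    ∃ c : ℝ, 0 < c ∧ ∀ w : ℂ, 1 / 2 ≤ ‖w‖ → ‖w‖ ≤ 1 →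
      ∀ eps : ℝ, 0 < eps → ∀ u v : ℂ, ‖u‖ ≤ M → ‖v‖ ≤ M →
        |‖v + tau1 * w‖ - ‖u + tau1 * w‖| ≤ eps →
        |‖v + tau2 * w‖ - ‖u + tau2 * w‖| ≤ eps →
        |‖v + tau3 * w‖ - ‖u + tau3 * w‖| ≤ eps →
        ‖v - u‖ ≤ c * eps := by
  set a := tau2 - tau1 with ha
  set b := tau3 - tau1 with hb
  have hpair := LinearIndependent.pair_iff.mp htau
  -- determinant is nonzero
  have hD : a.re * b.im - a.im * b.re ≠ 0 := by
    intro h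
    have h1 : (b.im) • a + (-a.im) • b = 0 := by
      apply Complex.ext <;>
        simp [Complex.real_smul, Complex.mul_re, Complex.mul_im] <;> linarith
    obtain ⟨hb1, ha1⟩ := hpair _ _ h1
    have ha1 : a.im = 0 := by linarith [neg_eq_zero.mp ha1]
    have h2 : (b.re) • a + (-a.re) • b = 0 := by
      apply Complex.ext <;>
        simp [Complex.real_smul, Complex.mul_re, Complex.mul_im, ha1, hb1] <;> ring
    obtain ⟨hb2, ha2⟩ := hpair _ _ h2
    have ha2 : a.re = 0 := by linarith [neg_eq_zero.mp ha2]
    have : (1 : ℝ) • a + (0 : ℝ) • b = 0 := by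
      simp [Complex.ext_iff, ha1, ha2]
    exact one_ne_zero (hpair _ _ this).1
  set D : ℝ := a.re * b.im - a.im * b.re with hDdef
  have hDpos : 0 < |D| := abs_pos.mpr hD
  set T : ℝ := ‖tau1‖ + ‖tau2‖ + ‖tau3‖ with hT
  have hT0 : 0 ≤ T := by positivity
  set K : ℝ := 2 * (M + T) with hK
  have hK0 : 0 ≤ K := by positivity
  set N : ℝ := |a.re| + |a.im| + |b.re| + |b.im| with hN
  have hN0 : 0 ≤ N := by positivity
  refine ⟨2 * K * N / |D| + 1, by positivity, ?_⟩
  intro w hw1 hw2 eps heps u v hu hv h1 h2 h3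
  -- per-j bound on difference of squared moduli
  have key : ∀ tau : ℂ, ‖tau‖ ≤ T →
      |‖v + tau * w‖ - ‖u + tau * w‖| ≤ eps →
      |Complex.normSq (v + tau * w) - Complex.normSq (u + tau * w)| ≤ eps * K := by
    intro tau htle hle
    have hP : ‖v + tau * w‖ ≤ M + T := by
      calc ‖v + tau * w‖ ≤ ‖v‖ + ‖tau * w‖ :=
            norm_add_le _ _
        _ ≤ M + T := by
            rw [norm_mul]
            nlinarith [norm_nonneg tau, norm_nonneg w]
    have hQ : ‖u + tau * w‖ ≤ M + T := by
      calc ‖u + tau * w‖ ≤ ‖u‖ + ‖tau * w‖ :=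
            norm_add_le _ _
        _ ≤ M + T := by
            rw [norm_mul]
            nlinarith [norm_nonneg tau, norm_nonneg w]
    have hsq : Complex.normSq (v + tau * w) - Complex.normSq (u + tau * w)
        = (‖v + tau * w‖ - ‖u + tau * w‖)
          * (‖v + tau * w‖ + ‖u + tau * w‖) := by
      rw [← Complex.sq_norm, ← Complex.sq_norm]; ring
    rw [hsq, abs_mul]
    have hsum : |‖v + tau * w‖ + ‖u + tau * w‖| ≤ K := by
      rw [abs_of_nonneg (by positivity)]
      rw [hK]; linarith
    exact mul_le_mul hle hsum (abs_nonneg _) (le_of_lt heps)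
  have ht1 : ‖tau1‖ ≤ T := by
    have := norm_nonneg tau2; have := norm_nonneg tau3
    rw [hT]; linarith
  have ht2 : ‖tau2‖ ≤ T := by
    have := norm_nonneg tau1; have := norm_nonneg tau3
    rw [hT]; linarith
  have ht3 : ‖tau3‖ ≤ T := by
    have := norm_nonneg tau1; have := norm_nonneg tau2
    rw [hT]; linarith
  have e1 := key tau1 ht1 h1
  have e2 := key tau2 ht2 h2
  have e3 := key tau3 ht3 h3
  set z : ℂ := (v - u) * (starRingEnd ℂ) w with hz
  -- algebraic identities
  have id2 : Complex.normSq (v + tau2 * w) - Complex.normSq (u + tau2 * w)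
      - (Complex.normSq (v + tau1 * w) - Complex.normSq (u + tau1 * w))
      = 2 * (z.re * a.re + z.im * a.im) := by
    simp only [hz, ha, Complex.normSq_apply, Complex.mul_re, Complex.mul_im,
      Complex.add_re, Complex.add_im, Complex.sub_re, Complex.sub_im,
      Complex.conj_re, Complex.conj_im]
    ring
  have id3 : Complex.normSq (v + tau3 * w) - Complex.normSq (u + tau3 * w)
      - (Complex.normSq (v + tau1 * w) - Complex.normSq (u + tau1 * w))
      = 2 * (z.re * b.re + z.im * b.im) := by
    simp only [hz, hb, Complex.normSq_apply, Complex.mul_re, Complex.mul_im,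
      Complex.add_re, Complex.add_im, Complex.sub_re, Complex.sub_im,
      Complex.conj_re, Complex.conj_im]
    ring
  have hLa : |z.re * a.re + z.im * a.im| ≤ eps * K := by
    have := abs_sub _ _ |>.trans (add_le_add e2 e1)
    rw [id2] at this
    rw [abs_mul, abs_two] at this
    linarith
  have hLb : |z.re * b.re + z.im * b.im| ≤ eps * K := by
    have := abs_sub _ _ |>.trans (add_le_add e3 e1)
    rw [id3] at this
    rw [abs_mul, abs_two] at this
    linarith
  -- invert the 2x2 system
  have hzre : |z.re| * |D| ≤ eps * K * (|b.im| + |a.im|) := by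
    have hid : z.re * D = (z.re * a.re + z.im * a.im) * b.im
        - (z.re * b.re + z.im * b.im) * a.im := by rw [hDdef]; ring
    calc |z.re| * |D| = |z.re * D| := (abs_mul _ _).symm
      _ ≤ |(z.re * a.re + z.im * a.im) * b.im| + |(z.re * b.re + z.im * b.im) * a.im| := by
          rw [hid]; exact abs_sub _ _
      _ ≤ eps * K * |b.im| + eps * K * |a.im| := by
          rw [abs_mul, abs_mul]
          gcongr
      _ = eps * K * (|b.im| + |a.im|) := by ring
  have hzim : |z.im| * |D| ≤ eps * K * (|b.re| + |a.re|) := by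
    have hid : z.im * D = (z.re * b.re + z.im * b.im) * a.re
        - (z.re * a.re + z.im * a.im) * b.re := by rw [hDdef]; ring
    calc |z.im| * |D| = |z.im * D| := (abs_mul _ _).symm
      _ ≤ |(z.re * b.re + z.im * b.im) * a.re| + |(z.re * a.re + z.im * a.im) * b.re| := by
          rw [hid]; exact abs_sub _ _
      _ ≤ eps * K * |a.re| + eps * K * |b.re| := by
          rw [abs_mul, abs_mul]
          gcongr
      _ = eps * K * (|b.re| + |a.re|) := by ring
  have hzabs : ‖z‖ ≤ |z.re| + |z.im| := Complex.norm_le_abs_re_add_abs_im z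
  have hzD : ‖z‖ * |D| ≤ eps * K * N := by
    have hh1 : ‖z‖ * |D| ≤ (|z.re| + |z.im|) * |D| :=
      mul_le_mul_of_nonneg_right hzabs hDpos.le
    have hh2 : (|z.re| + |z.im|) * |D| = |z.re| * |D| + |z.im| * |D| := add_mul _ _ _
    have hh3 : eps * K * (|b.im| + |a.im|) + eps * K * (|b.re| + |a.re|)
        = eps * K * N := by rw [hN]; ring
    linarith
  have hzle : ‖z‖ ≤ eps * K * N / |D| := by
    rw [le_div_iff₀ hDpos]; exact hzD
  -- relate |v - u| to |z|
  have habsz : ‖z‖ = ‖v - u‖ * ‖w‖ := by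
    rw [hz, norm_mul, Complex.norm_conj]
  have hdz : ‖v - u‖ ≤ 2 * ‖z‖ := by
    rw [habsz]
    have := mul_le_mul_of_nonneg_left hw1 (norm_nonneg (v - u))
    linarith
  calc ‖v - u‖ ≤ 2 * ‖z‖ := hdz
    _ ≤ 2 * (eps * K * N / |D|) := by linarith
    _ = (2 * K * N / |D|) * eps := by ring
    _ ≤ (2 * K * N / |D| + 1) * eps := by rw [add_mul, one_mul]; linarith
end

section
/- Let mu > 0, let omega_min < omega_max be real numbers, let tau in C, let q and xhat be unit vectors in R^2, let z0, p in R^2, and let u : [omega_min, omega_max] -> C be continuous. Define H(p') := integral over omega in [omega_min, omega_max] of u(omega) exp( i (omega/sqrt(mu)) (xhat . p') ) d omega, and define K(omega) := ( u(omega) conj(tau) exp( i (omega/sqrt(mu)) (z0 . xhat) ) + conj(u(omega)) tau exp( -i (omega/sqrt(mu)) (z0 . xhat) ) ) (q . xhat_perp). Then integral over omega in [omega_min, omega_max] of K(omega) cos( (omega/sqrt(mu)) (xhat . (p - z0)) ) d omega = U + conj(U), where U := (conj(tau) (q . xhat_perp) / 2) * ( H(p) + H(2 z0 - p) ). -/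
open MeasureTheory

set_option linter.unusedVariables false

private lemma conj_intervalIntegral (f : ℝ → ℂ) (a b : ℝ) :
    ∫ x in a..b, (starRingEnd ℂ) (f x) = starRingEnd ℂ (∫ x in a..b, f x) := by
  simp [intervalIntegral, integral_conj]

private lemma exp_helper (k a s c : ℝ) (v τ : ℂ) :
    (v * starRingEnd ℂ τ * Complex.exp (Complex.I * (k : ℂ) * (s : ℂ))
      + starRingEnd ℂ v * τ * Complex.exp (-Complex.I * (k : ℂ) * (s : ℂ))) * (c : ℂ)
      * (Real.cos (k * (a - s)) : ℂ)
    = (starRingEnd ℂ τ * (c : ℂ) / 2) *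
        (v * Complex.exp (Complex.I * (k : ℂ) * (a : ℂ))
          + v * Complex.exp (Complex.I * (k : ℂ) * ((2 * s - a : ℝ) : ℂ)))
      + starRingEnd ℂ ((starRingEnd ℂ τ * (c : ℂ) / 2) *
        (v * Complex.exp (Complex.I * (k : ℂ) * (a : ℂ))
          + v * Complex.exp (Complex.I * (k : ℂ) * ((2 * s - a : ℝ) : ℂ)))) := by
  have hcos : (Real.cos (k * (a - s)) : ℂ)
      = (Complex.exp ((k : ℂ) * ((a : ℂ) - (s : ℂ)) * Complex.I)
        + Complex.exp (-((k : ℂ) * ((a : ℂ) - (s : ℂ))) * Complex.I)) / 2 := by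
    rw [Complex.ofReal_cos]; push_cast; rw [Complex.cos]
  have e1 : Complex.exp ((k : ℂ) * ((a : ℂ) - (s : ℂ)) * Complex.I)
      = Complex.exp (Complex.I * (k : ℂ) * (a : ℂ))
        * (Complex.exp (Complex.I * (k : ℂ) * (s : ℂ)))⁻¹ := by
    rw [← Complex.exp_neg, ← Complex.exp_add]; ring_nf
  have e2 : Complex.exp (-((k : ℂ) * ((a : ℂ) - (s : ℂ))) * Complex.I)
      = (Complex.exp (Complex.I * (k : ℂ) * (a : ℂ)))⁻¹
        * Complex.exp (Complex.I * (k : ℂ) * (s : ℂ)) := by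
    rw [← Complex.exp_neg, ← Complex.exp_add]; ring_nf
  have e3 : Complex.exp (-Complex.I * (k : ℂ) * (s : ℂ))
      = (Complex.exp (Complex.I * (k : ℂ) * (s : ℂ)))⁻¹ := by
    rw [← Complex.exp_neg]; ring_nf
  have e4 : Complex.exp (Complex.I * (k : ℂ) * ((2 * s - a : ℝ) : ℂ))
      = (Complex.exp (Complex.I * (k : ℂ) * (s : ℂ))) ^ 2
        * (Complex.exp (Complex.I * (k : ℂ) * (a : ℂ)))⁻¹ := by
    rw [← Complex.exp_neg, sq, ← Complex.exp_add, ← Complex.exp_add]; push_cast; ring_nf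
  have e5 : starRingEnd ℂ (Complex.exp (Complex.I * (k : ℂ) * (a : ℂ)))
      = (Complex.exp (Complex.I * (k : ℂ) * (a : ℂ)))⁻¹ := by
    rw [← Complex.exp_conj, ← Complex.exp_neg]
    congr 1
    simp [map_mul, Complex.conj_I, Complex.conj_ofReal]
  have e6 : starRingEnd ℂ (Complex.exp (Complex.I * (k : ℂ) * (s : ℂ)))
      = (Complex.exp (Complex.I * (k : ℂ) * (s : ℂ)))⁻¹ := by
    rw [← Complex.exp_conj, ← Complex.exp_neg]
    congr 1
    simp [map_mul, Complex.conj_I, Complex.conj_ofReal]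
  set w := Complex.exp (Complex.I * (k : ℂ) * (a : ℂ)) with hw
  set vv := Complex.exp (Complex.I * (k : ℂ) * (s : ℂ)) with hv
  have hw0 : w ≠ 0 := Complex.exp_ne_zero _
  have hv0 : vv ≠ 0 := Complex.exp_ne_zero _
  rw [hcos, e1, e2, e3, e4]
  simp only [map_add, map_mul, map_div₀, map_pow, map_inv₀, Complex.conj_conj,
    Complex.conj_ofReal, e5, e6, map_ofNat]
  field_simp
  ring_nf

/-- Analytical basis of the direct sampling indicator `I^Θ_{z₀,S}(p)` for the
multi-frequency phaseless source problem: the integral over the frequency band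
of the phaseless-data combination `K` against the cosine kernel equals
`U + conj U` with `U = (conj τ (q ⋅ x̂ᵖᵉʳᵖ) / 2)(H(p) + H(2 z₀ - p))`, where
`ω/√μ` is the shear wavenumber. -/
theorem stmt_17 (μ : ℝ) (hμ : 0 < μ) (ωmin ωmax : ℝ) (hω : ωmin < ωmax) (τ : ℂ)
    (q xhat : ℝ × ℝ) (hq : q.1 ^ 2 + q.2 ^ 2 = 1) (hx : xhat.1 ^ 2 + xhat.2 ^ 2 = 1)
    (z0 p : ℝ × ℝ) (u : ℝ → ℂ) (hu : ContinuousOn u (Set.Icc ωmin ωmax))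
    (H : ℝ × ℝ → ℂ)
    (hH : H = fun p' => ∫ ω in ωmin..ωmax,
        u ω * Complex.exp (Complex.I * ((ω / Real.sqrt μ : ℝ) : ℂ) * (dotR xhat p' : ℂ)))
    (K : ℝ → ℂ)
    (hK : K = fun ω =>
        (u ω * starRingEnd ℂ τ *
            Complex.exp (Complex.I * ((ω / Real.sqrt μ : ℝ) : ℂ) * (dotR z0 xhat : ℂ))
          + starRingEnd ℂ (u ω) * τ *
            Complex.exp (-Complex.I * ((ω / Real.sqrt μ : ℝ) : ℂ) * (dotR z0 xhat : ℂ)))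
        * (dotR q (perp xhat) : ℂ)) :
    ∫ ω in ωmin..ωmax, K ω * (Real.cos ((ω / Real.sqrt μ) * dotR xhat (p - z0)) : ℂ)
      = (starRingEnd ℂ τ * (dotR q (perp xhat) : ℂ) / 2) *
          (H p + H ((2 : ℝ) • z0 - p))
        + starRingEnd ℂ ((starRingEnd ℂ τ * (dotR q (perp xhat) : ℂ) / 2) *
          (H p + H ((2 : ℝ) • z0 - p))) := by
  subst hH hK
  set c : ℝ := dotR q (perp xhat) with hc
  set a : ℝ := dotR xhat p with ha
  set s : ℝ := dotR z0 xhat with hs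
  have hBa : dotR xhat ((2 : ℝ) • z0 - p) = 2 * s - a := by
    simp only [dotR, hs, ha, Prod.fst_sub, Prod.snd_sub, Prod.smul_fst, Prod.smul_snd,
      smul_eq_mul]
    ring
  have hTa : dotR xhat (p - z0) = a - s := by
    simp only [dotR, hs, ha, Prod.fst_sub, Prod.snd_sub]
    ring
  simp only [hBa, hTa]
  -- the two auxiliary integrands
  set F1 : ℝ → ℂ := fun ω => u ω * Complex.exp (Complex.I * ((ω / Real.sqrt μ : ℝ) : ℂ) * (a : ℂ)) with hF1def
  set F2 : ℝ → ℂ := fun ω => u ω * Complex.exp (Complex.I * ((ω / Real.sqrt μ : ℝ) : ℂ) * ((2 * s - a : ℝ) : ℂ)) with hF2def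
  set C : ℂ := starRingEnd ℂ τ * (c : ℂ) / 2 with hC
  have hcont : ∀ b : ℝ, ContinuousOn (fun ω : ℝ =>
      u ω * Complex.exp (Complex.I * ((ω / Real.sqrt μ : ℝ) : ℂ) * (b : ℂ)))
      (Set.Icc ωmin ωmax) := by
    intro b
    apply hu.mul
    apply Continuous.continuousOn
    fun_prop
  have hi1 : IntervalIntegrable F1 volume ωmin ωmax := by
    apply ContinuousOn.intervalIntegrable
    rw [Set.uIcc_of_le hω.le]
    exact hcont a
  have hi2 : IntervalIntegrable F2 volume ωmin ωmax := by
    apply ContinuousOn.intervalIntegrable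
    rw [Set.uIcc_of_le hω.le]
    exact hcont (2 * s - a)
  have hiG : IntervalIntegrable (fun ω => C * (F1 ω + F2 ω)) volume ωmin ωmax :=
    (hi1.add hi2).const_mul C
  have hiGc : IntervalIntegrable (fun ω => starRingEnd ℂ (C * (F1 ω + F2 ω))) volume ωmin ωmax := by
    apply ContinuousOn.intervalIntegrable
    rw [Set.uIcc_of_le hω.le]
    exact Complex.continuous_conj.comp_continuousOn
      (continuousOn_const.mul ((hcont a).add (hcont (2 * s - a))))
  have hpt : ∀ ω : ℝ,
      ((u ω * starRingEnd ℂ τ *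
          Complex.exp (Complex.I * ((ω / Real.sqrt μ : ℝ) : ℂ) * (s : ℂ))
        + starRingEnd ℂ (u ω) * τ *
          Complex.exp (-Complex.I * ((ω / Real.sqrt μ : ℝ) : ℂ) * (s : ℂ))) * (c : ℂ))
        * (Real.cos ((ω / Real.sqrt μ) * (a - s)) : ℂ)
      = C * (F1 ω + F2 ω) + starRingEnd ℂ (C * (F1 ω + F2 ω)) := by
    intro ω
    have := exp_helper (ω / Real.sqrt μ) a s c (u ω) τ
    simpa [hF1def, hF2def, hC, mul_comm, mul_left_comm, mul_assoc] using this
  calc ∫ ω in ωmin..ωmax,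
        ((u ω * starRingEnd ℂ τ *
            Complex.exp (Complex.I * ((ω / Real.sqrt μ : ℝ) : ℂ) * (s : ℂ))
          + starRingEnd ℂ (u ω) * τ *
            Complex.exp (-Complex.I * ((ω / Real.sqrt μ : ℝ) : ℂ) * (s : ℂ))) * (c : ℂ))
          * (Real.cos ((ω / Real.sqrt μ) * (a - s)) : ℂ)
      = ∫ ω in ωmin..ωmax, (C * (F1 ω + F2 ω) + starRingEnd ℂ (C * (F1 ω + F2 ω))) := by
        apply intervalIntegral.integral_congr
        intro ω _
        exact hpt ω
    _ = (∫ ω in ωmin..ωmax, C * (F1 ω + F2 ω))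
        + ∫ ω in ωmin..ωmax, starRingEnd ℂ (C * (F1 ω + F2 ω)) :=
        intervalIntegral.integral_add hiG hiGc
    _ = C * ((∫ ω in ωmin..ωmax, F1 ω) + ∫ ω in ωmin..ωmax, F2 ω)
        + starRingEnd ℂ (C * ((∫ ω in ωmin..ωmax, F1 ω) + ∫ ω in ωmin..ωmax, F2 ω)) := by
        rw [conj_intervalIntegral, intervalIntegral.integral_const_mul,
          intervalIntegral.integral_add hi1 hi2]
end
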